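/- Let G be a finite simple graph with vertex set {1,…,n} and edge set E, and let m be a natural number. The following system of polynomials in the variables y_{ij} ({i,j} ∈ E) has a common zero over ℂ if and only if G has a regular spanning subgraph with m edges, i.e., there is a set E' ⊆ E with |E'| = m and a natural number r such that every vertex of G is incident to exactly r edges of E': (∑_{{i,j}∈E} y_{ij}) − m = 0; y_{ij}² − y_{ij} = 0 for all {i,j} ∈ E; and ∑_{j∈N(i)} y_{ij} − ∑_{k∈N(ℓ)} y_{kℓ} = 0 for every pair of vertices i, ℓ ∈ {1,…,n}. -/
import Mathlib
open Finset

lemma key {n : ℕ} (G : SimpleGraph (Fin n)) [DecidableRel G.Adj]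
    (zy : Sym2 (Fin n) → ℂ) (i : Fin n) :
    ∑ j ∈ G.neighborFinset i, zy s(i, j)
      = ∑ e ∈ G.edgeFinset.filter (fun e => i ∈ e), zy e := by
  refine Finset.sum_bij' (fun j _ => s(i, j))
    (fun e he => Sym2.Mem.other' ((Finset.mem_filter.mp he).2))
    ?_ ?_ ?_ ?_ ?_
  · intro j hj
    simp only [Finset.mem_filter, SimpleGraph.mem_edgeFinset, SimpleGraph.mem_edgeSet]
    exact ⟨by simpa using hj, Sym2.mem_mk_left i j⟩
  · intro e he
    have h2 : i ∈ e := (Finset.mem_filter.mp he).2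
    have h1 : e ∈ G.edgeSet := by simpa using (Finset.mem_filter.mp he).1
    rw [SimpleGraph.mem_neighborFinset]
    show s(i, Sym2.Mem.other' h2) ∈ G.edgeSet
    rw [Sym2.other_spec' h2]; exact h1
  · intro j hj
    exact Sym2.congr_right.mp (Sym2.other_spec' _)
  · intro e he
    exact Sym2.other_spec' _
  · intro j hj; rfl

theorem stmt12 (n : ℕ) (G : SimpleGraph (Fin n)) [DecidableRel G.Adj] (m : ℕ) :
    (∃ zy : Sym2 (Fin n) → ℂ,
      (∑ e ∈ G.edgeFinset, zy e) - (m : ℂ) = 0 ∧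
      (∀ e ∈ G.edgeFinset, zy e ^ 2 - zy e = 0) ∧
      (∀ i l : Fin n,
        (∑ j ∈ G.neighborFinset i, zy s(i, j)) -
          (∑ k ∈ G.neighborFinset l, zy s(k, l)) = 0))
    ↔
    (∃ E' ⊆ G.edgeFinset, E'.card = m ∧
      ∃ r : ℕ, ∀ v : Fin n, (E'.filter fun e => v ∈ e).card = r) := by
  classical
  constructor
  · rintro ⟨zy, hsum, hsq, hdeg⟩
    have h01 : ∀ e ∈ G.edgeFinset, zy e = 0 ∨ zy e = 1 := by
      intro e he
      have h2 := hsq e he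
      have h : zy e * (zy e - 1) = 0 := by linear_combination h2
      rcases mul_eq_zero.mp h with h | h
      · exact Or.inl h
      · exact Or.inr (by linear_combination h)
    set E' : Finset (Sym2 (Fin n)) := G.edgeFinset.filter (fun e => zy e = 1) with hE'
    have hsub : E' ⊆ G.edgeFinset := Finset.filter_subset _ _
    have hcount : ∀ s : Finset (Sym2 (Fin n)), s ⊆ G.edgeFinset →
        ∑ e ∈ s, zy e = ((s.filter (fun e => zy e = 1)).card : ℂ) := by
      intro s hs
      rw [← Finset.sum_filter_of_ne (p := fun e => zy e = 1)
        (fun x hx hne => (h01 x (hs hx)).resolve_left hne)]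
      rw [Finset.sum_congr rfl (fun e he => (Finset.mem_filter.mp he).2),
        Finset.sum_const]
      simp
    have hcard : E'.card = m := by
      have := hcount G.edgeFinset Finset.Subset.rfl
      rw [this, sub_eq_zero] at hsum
      exact_mod_cast hsum
    have hcc : ∀ v : Fin n, E'.filter (fun e => v ∈ e)
        = (G.edgeFinset.filter (fun e => v ∈ e)).filter (fun e => zy e = 1) := by
      intro v
      rw [hE', Finset.filter_comm]
    have hceq : ∀ i l : Fin n,
        ((E'.filter (fun e => i ∈ e)).card : ℂ)
          = ((E'.filter (fun e => l ∈ e)).card : ℂ) := by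
      intro i l
      have hd := hdeg i l
      have hswap : ∑ k ∈ G.neighborFinset l, zy s(k, l)
          = ∑ k ∈ G.neighborFinset l, zy s(l, k) :=
        Finset.sum_congr rfl fun k _ => by rw [Sym2.eq_swap]
      rw [hswap, key G zy i, key G zy l,
        hcount _ (Finset.filter_subset _ _), hcount _ (Finset.filter_subset _ _),
        sub_eq_zero] at hd
      rw [hcc i, hcc l]
      exact hd
    refine ⟨E', hsub, hcard, ?_⟩
    rcases Nat.eq_zero_or_pos n with hn | hn
    · exact ⟨0, fun v => absurd v.2 (by omega)⟩
    · refine ⟨(E'.filter (fun e => (⟨0, hn⟩ : Fin n) ∈ e)).card, fun v => ?_⟩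
      exact_mod_cast hceq v ⟨0, hn⟩
  · rintro ⟨E', hsub, hcard, r, hr⟩
    refine ⟨fun e => if e ∈ E' then 1 else 0, ?_, ?_, ?_⟩
    · rw [Finset.sum_ite_mem, Finset.inter_eq_right.mpr hsub, Finset.sum_const, hcard]
      simp
    · intro e _
      dsimp only
      split_ifs <;> ring
    · intro i l
      have hfe : ∀ v : Fin n, G.edgeFinset.filter (fun e => v ∈ e) ∩ E'
          = E'.filter (fun e => v ∈ e) := by
        intro v; ext e
        simp only [Finset.mem_filter, Finset.mem_inter, SimpleGraph.mem_edgeFinset]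
        constructor
        · rintro ⟨⟨_, hv⟩, hE⟩; exact ⟨hE, hv⟩
        · rintro ⟨hE, hv⟩; exact ⟨⟨by simpa using hsub hE, hv⟩, hE⟩
      have hv : ∀ v : Fin n,
          ∑ j ∈ G.neighborFinset v, (if s(v, j) ∈ E' then (1:ℂ) else 0) = r := by
        intro v
        refine (key G (fun e => if e ∈ E' then (1:ℂ) else 0) v).trans ?_
        rw [Finset.sum_ite_mem, hfe v, Finset.sum_const, hr v]
        simp
      have hswap : ∑ k ∈ G.neighborFinset l, (if s(k, l) ∈ E' then (1:ℂ) else 0)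
          = ∑ k ∈ G.neighborFinset l, (if s(l, k) ∈ E' then (1:ℂ) else 0) :=
        Finset.sum_congr rfl fun k _ => by rw [Sym2.eq_swap]
      rw [hv i]
      rw [show (∑ k ∈ G.neighborFinset l, (if s(k, l) ∈ E' then (1:ℂ) else 0)) = r from
        hswap.trans (hv l), sub_self]
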